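/- Let V be a finite-dimensional real inner product space, let C : V → V be a self-adjoint positive definite linear operator, let σ⁰ ∈ V with σ⁰ ≠ 0, and define σ_R := (‖σ⁰‖² / ⟨σ⁰, Cσ⁰⟩) · Cσ⁰ − σ⁰. Suppose c ≥ 0 is such that ⟨e, Ce⟩ ≤ c‖e‖² for every e ∈ V with ⟨e, σ⁰⟩ = 0. Then ‖σ_R‖² ≤ c · ‖σ⁰‖⁴ / ⟨σ⁰, Cσ⁰⟩, and hence ‖σ_R‖² ≤ c · ⟨σ⁰, C⁻¹σ⁰⟩. -/

import Mathlib

open scoped RealInnerProductSpace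

/-- Quantitative form of (1.27)-(1.28): if the quadratic form of `C` is bounded by
`c` on the orthogonal complement of `σ⁰`, then the perturbation
`σ_R := (‖σ⁰‖²/⟪σ⁰, Cσ⁰⟫) • Cσ⁰ − σ⁰` satisfies
`‖σ_R‖² ≤ c ‖σ⁰‖⁴/⟪σ⁰, Cσ⁰⟫` and hence `‖σ_R‖² ≤ c ⟪σ⁰, C⁻¹σ⁰⟫`. -/
theorem perturbation_norm_bound
    {V : Type*} [NormedAddCommGroup V] [InnerProductSpace ℝ V] [FiniteDimensional ℝ V]
    (C : V ≃ₗ[ℝ] V)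
    (hC_sa : ∀ u v : V, ⟪C u, v⟫ = ⟪u, C v⟫)
    (hC_pd : ∀ u : V, u ≠ 0 → 0 < ⟪u, C u⟫)
    (σ0 : V) (hσ0 : σ0 ≠ 0)
    (σR : V) (hσR : σR = (‖σ0‖ ^ 2 / ⟪σ0, C σ0⟫) • C σ0 - σ0)
    (c : ℝ) (hc : 0 ≤ c)
    (hsmall : ∀ e : V, ⟪e, σ0⟫ = 0 → ⟪e, C e⟫ ≤ c * ‖e‖ ^ 2) :
    ‖σR‖ ^ 2 ≤ c * ‖σ0‖ ^ 4 / ⟪σ0, C σ0⟫ ∧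
      ‖σR‖ ^ 2 ≤ c * ⟪σ0, C.symm σ0⟫ := by
  have hapos : (0:ℝ) < ⟪σ0, C σ0⟫ := hC_pd σ0 hσ0
  set a : ℝ := ⟪σ0, C σ0⟫ with ha
  set n : ℝ := ‖σ0‖ ^ 2 with hn
  have hsymm : ∀ u v : V, ⟪u, C v⟫ = ⟪v, C u⟫ := fun u v => by
    rw [← hC_sa, real_inner_comm]
  have hpsd : ∀ w : V, 0 ≤ ⟪w, C w⟫ := fun w => by
    rcases eq_or_ne w 0 with h | h
    · simp [h]
    · exact (hC_pd w h).le
  -- Cauchy-Schwarz for the C-inner product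
  have cs : ∀ u v : V, ⟪u, C v⟫ ^ 2 ≤ ⟪u, C u⟫ * ⟪v, C v⟫ := by
    intro u v
    rcases eq_or_ne v 0 with h | h
    · simp [h]
    · have hv : 0 < ⟪v, C v⟫ := hC_pd v h
      set t : ℝ := ⟪u, C v⟫ / ⟪v, C v⟫ with ht
      have h0 := hpsd (u - t • v)
      have hexp : ⟪u - t • v, C (u - t • v)⟫
          = ⟪u, C u⟫ - 2 * t * ⟪u, C v⟫ + t ^ 2 * ⟪v, C v⟫ := by
        simp only [map_sub, map_smul, inner_sub_left, inner_sub_right,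
          real_inner_smul_left, real_inner_smul_right]
        rw [hsymm v u]; ring
      rw [hexp] at h0
      have htv : t * ⟪v, C v⟫ = ⟪u, C v⟫ := by
        rw [ht]; field_simp
      nlinarith [htv, hv]
  -- orthogonality of σR and σ0
  have horth : ⟪σR, σ0⟫ = 0 := by
    rw [hσR, inner_sub_left, real_inner_smul_left]
    have h1 : ⟪C σ0, σ0⟫ = a := by rw [hC_sa]
    have h2 : ⟪σ0, σ0⟫ = n := real_inner_self_eq_norm_sq σ0
    rw [h1, h2]
    field_simp; ring
  have hRR : ‖σR‖ ^ 2 = (n / a) * ⟪σR, C σ0⟫ := by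
    rw [← real_inner_self_eq_norm_sq]
    conv_lhs => rw [show (σR:V) = σR from rfl]
    nth_rewrite 2 [hσR]
    rw [inner_sub_right, real_inner_smul_right, horth]
    ring
  -- second factor: ‖σ0‖⁴ ≤ a * ⟪σ0, C.symm σ0⟫
  have hinv : n ^ 2 ≤ a * ⟪σ0, C.symm σ0⟫ := by
    have h1 : ⟪σ0, C (C.symm σ0)⟫ = n := by
      rw [C.apply_symm_apply, real_inner_self_eq_norm_sq]
    have h2 : ⟪C.symm σ0, C (C.symm σ0)⟫ = ⟪σ0, C.symm σ0⟫ := by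
      rw [C.apply_symm_apply, real_inner_comm]
    have := cs σ0 (C.symm σ0)
    rw [h1, h2] at this
    exact this
  have hinvpos : 0 ≤ ⟪σ0, C.symm σ0⟫ := by
    nlinarith [sq_nonneg n, hapos]
  -- main bound
  have hmain : ‖σR‖ ^ 2 ≤ c * n ^ 2 / a := by
    rcases eq_or_ne σR 0 with h | h
    · rw [h]
      simp only [norm_zero]
      have h0 : (0:ℝ) ≤ c * n ^ 2 / a := div_nonneg (mul_nonneg hc (sq_nonneg n)) hapos.le
      nlinarith [h0]
    · have hRpos : 0 < ‖σR‖ ^ 2 := by exact pow_pos (norm_pos_iff.mpr h) 2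
      have hCR : ⟪σR, C σR⟫ ≤ c * ‖σR‖ ^ 2 := hsmall σR horth
      have hcs := cs σR σ0
      have hstep : ⟪σR, C σ0⟫ ^ 2 ≤ c * ‖σR‖ ^ 2 * a := by
        calc ⟪σR, C σ0⟫ ^ 2 ≤ ⟪σR, C σR⟫ * a := hcs
          _ ≤ c * ‖σR‖ ^ 2 * a := by nlinarith
      have h4 : (‖σR‖ ^ 2) ^ 2 ≤ (n / a) ^ 2 * (c * ‖σR‖ ^ 2 * a) := by
        calc (‖σR‖ ^ 2) ^ 2 = (n / a) ^ 2 * ⟪σR, C σ0⟫ ^ 2 := by rw [hRR]; ring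
          _ ≤ (n / a) ^ 2 * (c * ‖σR‖ ^ 2 * a) :=
              mul_le_mul_of_nonneg_left hstep (sq_nonneg _)
      have h4' : (‖σR‖ ^ 2) ^ 2 * a ≤ c * n ^ 2 * ‖σR‖ ^ 2 := by
        have hne : a ≠ 0 := hapos.ne'
        have : (n / a) ^ 2 * (c * ‖σR‖ ^ 2 * a) * a = c * n ^ 2 * ‖σR‖ ^ 2 := by
          field_simp
        nlinarith [mul_le_mul_of_nonneg_right h4 hapos.le, this]
      rw [le_div_iff₀ hapos]
      nlinarith [h4', hRpos]
  constructor
  · have : c * ‖σ0‖ ^ 4 / a = c * n ^ 2 / a := by rw [hn]; ring_nf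
    rw [this]; exact hmain
  · refine hmain.trans ?_
    rw [div_le_iff₀ hapos]
    nlinarith [hinv, hc]
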